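/- Let k ≥ 1 and let f : (Fin k → ℝ) → ℝ be continuously differentiable, (L,p)-Hölder smooth with L > 0, p > 0, and bounded below by f* (f(x) ≥ f* for all x). Let α ∈ (0,1), set K = L(1−α)/(1+p−α), choose λ with 0 < λ < (1/K)^{1/p}, and choose η with 0 < η < ((1+p)(λ^{1−p} − Kλ)/(L(λ^{1−p} + Kλ)^{1+p}))^{1/p}. Let T ≥ 0 and let the sequence (x_t) satisfy x_{t+1} = x_t − η·δ̂^{α,p}_{c_t} f(x_t) (coordinate-wise p-fractional gradient operator), where c_t ∈ Fin k → ℝ satisfies |x_t(i) − c_t(i)| = λ·|∂f/∂xᵢ(x_t)|^{1/p} for every i. Set ψ = η·(λ^{1−p} − Kλ − (L/(1+p))·η^p·(λ^{1−p} + Kλ)^{1+p}). Then min_{0 ≤ t ≤ T} Σᵢ |∂f/∂xᵢ(x_t)|^{1+1/p} ≤ (f(x₀) − f*)/((T+1)·ψ). -/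

import Mathlib

open scoped BigOperators

/-- The Caputo fractional derivative of order `α ∈ (0,1)` with terminal `c`. -/
noncomputable def caputo (α c : ℝ) (f : ℝ → ℝ) (x : ℝ) : ℝ :=
  (1 / Real.Gamma (1 - α)) * ∫ t in c..x, deriv f t / |x - t| ^ α

/-- The `p`-fractional gradient operator `δ̂^{α,p}_c f (x)`, with the convention that it is
`0` when `x = c`. -/
noncomputable def pFracGrad (α p c : ℝ) (f : ℝ → ℝ) (x : ℝ) : ℝ :=
  if x = c then 0
  else (Real.Gamma (2 - α) * |x - c| ^ (α - p + 1) / (x - c)) * caputo α c f x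

/-- The gradient of `f : (Fin k → ℝ) → ℝ` computed coordinate-wise via partial
derivatives of the one-dimensional slices. -/
noncomputable def partialGrad {k : ℕ} (f : (Fin k → ℝ) → ℝ) (x : Fin k → ℝ) :
    Fin k → ℝ :=
  fun i => deriv (fun y : ℝ => f (Function.update x i y)) (x i)

/-- The coordinate-wise `p`-fractional gradient operator for `f : (Fin k → ℝ) → ℝ`. -/
noncomputable def pFracGradVec {k : ℕ} (α p : ℝ) (c : Fin k → ℝ)
    (f : (Fin k → ℝ) → ℝ) (x : Fin k → ℝ) : Fin k → ℝ :=
  fun i => pFracGrad α p (c i) (fun y : ℝ => f (Function.update x i y)) (x i)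

/-- `f : (Fin k → ℝ) → ℝ` is `(L,p)`-Hölder smooth. -/
def VHolderSmooth {k : ℕ} (L p : ℝ) (f : (Fin k → ℝ) → ℝ) : Prop :=
  ∀ x y : Fin k → ℝ,
    |f y - f x - ∑ i, partialGrad f x i * (y i - x i)| ≤
      L / (1 + p) * ∑ i, |y i - x i| ^ (1 + p)

section Aux
open MeasureTheory intervalIntegral Set Filter

lemma w_int (r : ℝ) (hr : -1 < r) (x a b : ℝ) :
    IntervalIntegrable (fun t => (x - t) ^ r) volume a b := by
  have h := intervalIntegral.intervalIntegrable_rpow' (a := x - a) (b := x - b) hr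
  simpa using h.comp_sub_left x

lemma w_val (r : ℝ) (hr : -1 < r) (x a b : ℝ) :
    ∫ t in a..b, (x - t) ^ r = ((x - a) ^ (r + 1) - (x - b) ^ (r + 1)) / (r + 1) := by
  rw [intervalIntegral.integral_comp_sub_left (fun s => s ^ r) x,
    integral_rpow (Or.inl hr)]

lemma caputo_est_lt (g : ℝ → ℝ) (L p α : ℝ) (hL : 0 ≤ L) (hp : 0 < p)
    (hα0 : 0 < α) (hα1 : α < 1)
    (hdg : Differentiable ℝ g) (hcg : Continuous (deriv g))
    (hH : ∀ s t : ℝ, |g s - g t - deriv g t * (s - t)| ≤ L / (1 + p) * |s - t| ^ (1 + p))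
    {c x : ℝ} (hcx : c < x) :
    |caputo α c g x - deriv g x * (x - c) ^ (1 - α) / Real.Gamma (2 - α)| ≤
      L * (x - c) ^ (1 + p - α) / ((1 + p - α) * Real.Gamma (1 - α)) := by
  have hα' : (-1 : ℝ) < -α := by linarith
  have hpα : (0:ℝ) < 1 + p - α := by linarith
  have hΓpos : 0 < Real.Gamma (1 - α) := Real.Gamma_pos_of_pos (by linarith)
  have hΓ2 : Real.Gamma (2 - α) = (1 - α) * Real.Gamma (1 - α) := by
    have h : (2 - α) = (1 - α) + 1 := by ring
    rw [h, Real.Gamma_add_one (by intro h0; linarith [h0])]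
  set C := L / (1 + p) with hCdef
  have hC : 0 ≤ C := div_nonneg hL (by linarith)
  set u : ℝ → ℝ := fun t => g t - g x - deriv g x * (t - x) with hu_def
  have hu : ∀ t : ℝ, HasDerivAt u (deriv g t - deriv g x) t := by
    intro t
    have h1 : HasDerivAt g (deriv g t) t := (hdg t).hasDerivAt
    have h2 : HasDerivAt (fun t : ℝ => deriv g x * (t - x)) (deriv g x) t := by
      simpa using ((hasDerivAt_id t).sub_const x).const_mul (deriv g x)
    exact (h1.sub_const (g x)).sub h2
  have hub : ∀ t : ℝ, |u t| ≤ C * |t - x| ^ (1 + p) := fun t => hH t x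
  set F : ℝ → ℝ := fun b => ∫ t in c..b, (deriv g t - deriv g x) * (x - t) ^ (-α)
    with hF_def
  -- bound on F b for b ∈ Ico c x
  have Fbound : ∀ b ∈ Ico c x, |F b| ≤ C * (x - b) ^ (1 + p - α) +
      (C * (x - c) ^ (1 + p - α) + C * α * (x - c) ^ (1 + p - α) / (1 + p - α)) := by
    intro b hb
    obtain ⟨hcb, hbx⟩ := hb
    have hxb : 0 < x - b := by linarith
    have hpos : ∀ t ∈ uIcc c b, (0:ℝ) < x - t := by
      intro t ht
      rw [uIcc_of_le hcb] at ht
      have := ht.2; linarith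
    have hv : ∀ t ∈ uIcc c b,
        HasDerivAt (fun t : ℝ => (x - t) ^ (-α)) (α * (x - t) ^ (-α - 1)) t := by
      intro t ht
      have hbase : HasDerivAt (fun t : ℝ => x - t) (-1) t := by
        simpa using (hasDerivAt_id t).const_sub x
      have := hbase.rpow_const (p := -α) (Or.inl (ne_of_gt (hpos t ht)))
      convert this using 1
      ring_nf
    have hu' : ∀ t ∈ uIcc c b, HasDerivAt u (deriv g t - deriv g x) t := fun t _ => hu t
    have int_u' : IntervalIntegrable (fun t => deriv g t - deriv g x) volume c b :=
      (hcg.sub continuous_const).intervalIntegrable c b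
    have int_v' : IntervalIntegrable (fun t => α * (x - t) ^ (-α - 1)) volume c b := by
      apply ContinuousOn.intervalIntegrable
      apply continuousOn_const.mul
      exact ((continuous_const.sub continuous_id).continuousOn).rpow_const
        (fun t ht => Or.inl (ne_of_gt (hpos t ht)))
    have ibp := intervalIntegral.integral_mul_deriv_eq_deriv_mul hu' hv int_u' int_v'
    have hFb : F b = u b * (x - b) ^ (-α) - u c * (x - c) ^ (-α) -
        ∫ t in c..b, u t * (α * (x - t) ^ (-α - 1)) := by
      rw [hF_def]
      simp only
      linarith [ibp]
    -- bound the integral term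
    have hcontu : Continuous u := by
      apply Continuous.sub
      · exact (hdg.continuous.sub continuous_const)
      · exact continuous_const.mul (continuous_id.sub continuous_const)
    have int_uv' : IntervalIntegrable (fun t => u t * (α * (x - t) ^ (-α - 1))) volume c b :=
      int_v'.continuousOn_mul hcontu.continuousOn
    have int_rhs : IntervalIntegrable (fun t => C * α * (x - t) ^ (p - α)) volume c b :=
      (w_int (p - α) (by linarith) x c b).const_mul _
    have hptw : ∀ t ∈ Icc c b, |u t * (α * (x - t) ^ (-α - 1))| ≤
        C * α * (x - t) ^ (p - α) := by
      intro t ht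
      have hxt : 0 < x - t := by
        have := ht.2; linarith
      have h1 : |u t| ≤ C * (x - t) ^ (1 + p) := by
        have h := hub t
        have he : |t - x| = x - t := by
          rw [abs_of_nonpos (by linarith)]; ring
        rwa [he] at h
      have h2 : |u t * (α * (x - t) ^ (-α - 1))| =
          |u t| * (α * (x - t) ^ (-α - 1)) := by
        rw [abs_mul, abs_of_nonneg (mul_nonneg hα0.le (Real.rpow_nonneg hxt.le _))]
      rw [h2]
      calc |u t| * (α * (x - t) ^ (-α - 1))
          ≤ (C * (x - t) ^ (1 + p)) * (α * (x - t) ^ (-α - 1)) := by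
            apply mul_le_mul_of_nonneg_right h1 (by positivity)
        _ = C * α * ((x - t) ^ (1 + p) * (x - t) ^ (-α - 1)) := by ring
        _ = C * α * (x - t) ^ (p - α) := by
            rw [← Real.rpow_add hxt]
            have he : 1 + p + (-α - 1) = p - α := by ring
            rw [he]
    have hint1 : |∫ t in c..b, u t * (α * (x - t) ^ (-α - 1))| ≤
        C * α * (x - c) ^ (1 + p - α) / (1 + p - α) := by
      calc |∫ t in c..b, u t * (α * (x - t) ^ (-α - 1))|
          ≤ ∫ t in c..b, |u t * (α * (x - t) ^ (-α - 1))| :=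
            intervalIntegral.abs_integral_le_integral_abs hcb
        _ ≤ ∫ t in c..b, C * α * (x - t) ^ (p - α) :=
            intervalIntegral.integral_mono_on hcb int_uv'.abs int_rhs hptw
        _ = C * α * ∫ t in c..b, (x - t) ^ (p - α) := intervalIntegral.integral_const_mul _ _
        _ = C * α * (((x - c) ^ (p - α + 1) - (x - b) ^ (p - α + 1)) / (p - α + 1)) := by
            rw [w_val (p - α) (by linarith) x c b]
        _ ≤ C * α * (x - c) ^ (1 + p - α) / (1 + p - α) := by
            have h1 : (0:ℝ) ≤ (x - b) ^ (p - α + 1) := Real.rpow_nonneg (le_of_lt hxb) _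
            have h2 : (p - α + 1) = 1 + p - α := by ring
            rw [h2, mul_div_assoc]
            have h1' : (0:ℝ) ≤ (x - b) ^ (1 + p - α) := Real.rpow_nonneg hxb.le _
            have h3 : ((x - c) ^ (1 + p - α) - (x - b) ^ (1 + p - α)) / (1 + p - α) ≤
                (x - c) ^ (1 + p - α) / (1 + p - α) := by
              rw [div_le_div_iff₀ hpα hpα]
              nlinarith
            exact mul_le_mul_of_nonneg_left h3 (mul_nonneg hC hα0.le)
    have hxc : (0:ℝ) < x - c := by linarith
    have hb1 : |u b * (x - b) ^ (-α)| ≤ C * (x - b) ^ (1 + p - α) := by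
      have h1 : |u b| ≤ C * (x - b) ^ (1 + p) := by
        have h := hub b
        have he : |b - x| = x - b := by rw [abs_of_nonpos (by linarith)]; ring
        rwa [he] at h
      rw [abs_mul, abs_of_nonneg (Real.rpow_nonneg hxb.le _)]
      calc |u b| * (x - b) ^ (-α) ≤ (C * (x - b) ^ (1 + p)) * (x - b) ^ (-α) :=
            mul_le_mul_of_nonneg_right h1 (Real.rpow_nonneg hxb.le _)
        _ = C * (x - b) ^ (1 + p - α) := by
            rw [mul_assoc, ← Real.rpow_add hxb]
            have he : 1 + p + -α = 1 + p - α := by ring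
            rw [he]
    have hb2 : |u c * (x - c) ^ (-α)| ≤ C * (x - c) ^ (1 + p - α) := by
      have h1 : |u c| ≤ C * (x - c) ^ (1 + p) := by
        have h := hub c
        have he : |c - x| = x - c := by rw [abs_of_nonpos (by linarith)]; ring
        rwa [he] at h
      rw [abs_mul, abs_of_nonneg (Real.rpow_nonneg hxc.le _)]
      calc |u c| * (x - c) ^ (-α) ≤ (C * (x - c) ^ (1 + p)) * (x - c) ^ (-α) :=
            mul_le_mul_of_nonneg_right h1 (Real.rpow_nonneg hxc.le _)
        _ = C * (x - c) ^ (1 + p - α) := by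
            rw [mul_assoc, ← Real.rpow_add hxc]
            have he : 1 + p + -α = 1 + p - α := by ring
            rw [he]
    have htri : |F b| ≤ |u b * (x - b) ^ (-α)| + |u c * (x - c) ^ (-α)| +
        |∫ t in c..b, u t * (α * (x - t) ^ (-α - 1))| := by
      rw [hFb]
      have h1 : |u b * (x - b) ^ (-α) - u c * (x - c) ^ (-α) -
          ∫ t in c..b, u t * (α * (x - t) ^ (-α - 1))| ≤
          |u b * (x - b) ^ (-α) - u c * (x - c) ^ (-α)| +
          |∫ t in c..b, u t * (α * (x - t) ^ (-α - 1))| := abs_sub _ _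
      have h2 : |u b * (x - b) ^ (-α) - u c * (x - c) ^ (-α)| ≤
          |u b * (x - b) ^ (-α)| + |u c * (x - c) ^ (-α)| := abs_sub _ _
      linarith
    linarith
  -- limit argument
  have hxc : (0:ℝ) < x - c := by linarith
  have Iw : IntervalIntegrable (fun t => (x - t) ^ (-α)) volume c x := w_int (-α) hα' x c x
  have Iint : IntervalIntegrable (fun t => (deriv g t - deriv g x) * (x - t) ^ (-α))
      volume c x := Iw.continuousOn_mul ((hcg.sub continuous_const).continuousOn)
  have hcontF : ContinuousWithinAt F (Icc c x) x := by
    apply intervalIntegral.continuousWithinAt_primitive (measure_singleton x)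
    rw [show c ⊓ c = c from min_self c, show c ⊔ x = x from max_eq_right hcx.le]
    exact Iint
  have hne : (nhdsWithin x (Ico c x)).NeBot := by
    rw [← mem_closure_iff_nhdsWithin_neBot, closure_Ico (ne_of_lt hcx)]
    exact ⟨le_of_lt hcx, le_refl x⟩
  have htF : Tendsto F (nhdsWithin x (Ico c x)) (nhds (F x)) :=
    (hcontF.mono Ico_subset_Icc_self).tendsto
  have htabs : Tendsto (fun b => |F b|) (nhdsWithin x (Ico c x)) (nhds |F x|) := htF.abs
  have ht0 : Tendsto (fun b : ℝ => C * (x - b) ^ (1 + p - α))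
      (nhdsWithin x (Ico c x)) (nhds 0) := by
    have h1 : Tendsto (fun b : ℝ => x - b) (nhdsWithin x (Ico c x)) (nhds 0) := by
      have hcont : Continuous fun b : ℝ => x - b := continuous_const.sub continuous_id
      have h := (hcont.tendsto x).mono_left (nhdsWithin_le_nhds (s := Ico c x))
      simpa using h
    have h2 : ContinuousAt (fun s : ℝ => s ^ (1 + p - α)) 0 :=
      Real.continuousAt_rpow_const 0 _ (Or.inr (by linarith))
    have h3 := (h2.tendsto).comp h1
    simp only [Function.comp_def] at h3
    rw [Real.zero_rpow (by linarith : (1:ℝ) + p - α ≠ 0)] at h3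
    simpa using h3.const_mul C
  have hFx : |F x| ≤ C * (x - c) ^ (1 + p - α) +
      C * α * (x - c) ^ (1 + p - α) / (1 + p - α) := by
    have hlim : Tendsto (fun b : ℝ => C * (x - b) ^ (1 + p - α) +
        (C * (x - c) ^ (1 + p - α) + C * α * (x - c) ^ (1 + p - α) / (1 + p - α)))
        (nhdsWithin x (Ico c x)) (nhds (0 +
        (C * (x - c) ^ (1 + p - α) + C * α * (x - c) ^ (1 + p - α) / (1 + p - α)))) :=
      ht0.add tendsto_const_nhds
    have h := le_of_tendsto_of_tendsto htabs hlim
      (eventually_mem_nhdsWithin.mono (fun b hb => Fbound b hb))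
    linarith
  -- main identity
  have hint_w : ∫ t in c..x, (x - t) ^ (-α) = (x - c) ^ (1 - α) / (1 - α) := by
    rw [w_val (-α) hα' x c x, sub_self, Real.zero_rpow (by linarith : -α + 1 ≠ 0)]
    rw [show -α + 1 = 1 - α from by ring]
    ring
  have I1 : IntervalIntegrable (fun t => deriv g t * (x - t) ^ (-α)) volume c x :=
    Iw.continuousOn_mul hcg.continuousOn
  have I2 : IntervalIntegrable (fun t => deriv g x * (x - t) ^ (-α)) volume c x :=
    Iw.const_mul _
  have hsplit : F x = (∫ t in c..x, deriv g t * (x - t) ^ (-α)) -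
      deriv g x * ∫ t in c..x, (x - t) ^ (-α) := by
    have h : F x = ∫ t in c..x,
        (deriv g t * (x - t) ^ (-α) - deriv g x * (x - t) ^ (-α)) := by
      rw [hF_def]
      simp only
      congr 1
      funext t
      ring
    rw [h, intervalIntegral.integral_sub I1 I2, intervalIntegral.integral_const_mul]
  have hstep1 : ∫ t in c..x, deriv g t / |x - t| ^ α =
      ∫ t in c..x, deriv g t * (x - t) ^ (-α) := by
    apply intervalIntegral.integral_congr
    intro t ht
    rw [uIcc_of_le hcx.le] at ht
    show deriv g t / |x - t| ^ α = deriv g t * (x - t) ^ (-α)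
    have h1 : |x - t| = x - t := abs_of_nonneg (by linarith [ht.2])
    rw [h1, Real.rpow_neg (by linarith [ht.2] : (0:ℝ) ≤ x - t), div_eq_mul_inv]
  have hA : ∫ t in c..x, deriv g t * (x - t) ^ (-α) =
      deriv g x * ((x - c) ^ (1 - α) / (1 - α)) + F x := by
    rw [hsplit, hint_w]
    ring
  have hcap : caputo α c g x = (1 / Real.Gamma (1 - α)) *
      (deriv g x * ((x - c) ^ (1 - α) / (1 - α)) + F x) := by
    rw [caputo, hstep1, hA]
  have heq : caputo α c g x - deriv g x * (x - c) ^ (1 - α) / Real.Gamma (2 - α) =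
      F x / Real.Gamma (1 - α) := by
    rw [hcap, hΓ2]
    have h1 : (1 : ℝ) - α ≠ 0 := by intro h0; linarith [h0]
    field_simp
    ring
  have hFx2 : |F x| ≤ L * (x - c) ^ (1 + p - α) / (1 + p - α) := by
    have he : C * (x - c) ^ (1 + p - α) + C * α * (x - c) ^ (1 + p - α) / (1 + p - α)
        = L * (x - c) ^ (1 + p - α) / (1 + p - α) := by
      rw [hCdef]
      field_simp
      ring
    linarith
  rw [heq]
  calc |F x / Real.Gamma (1 - α)| = |F x| / Real.Gamma (1 - α) := by
        rw [abs_div, abs_of_pos hΓpos]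
    _ ≤ (L * (x - c) ^ (1 + p - α) / (1 + p - α)) / Real.Gamma (1 - α) := by
        exact div_le_div_of_nonneg_right hFx2 hΓpos.le
    _ = L * (x - c) ^ (1 + p - α) / ((1 + p - α) * Real.Gamma (1 - α)) := by
        rw [div_div]


lemma caputo_reflect (g : ℝ → ℝ) (α c x : ℝ) :
    caputo α (-c) (fun y => g (-y)) (-x) = caputo α c g x := by
  rw [caputo, caputo]
  congr 1
  have h1 : (∫ t in (-c)..(-x), deriv (fun y => g (-y)) t / |-x - t| ^ α) =
      ∫ s in x..c, deriv (fun y => g (-y)) (-s) / |-x - -s| ^ α :=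
    (intervalIntegral.integral_comp_neg fun t => deriv (fun y => g (-y)) t / |-x - t| ^ α).symm
  rw [h1]
  have h2 : ∀ s : ℝ, deriv (fun y => g (-y)) (-s) / |-x - -s| ^ α =
      -(deriv g s / |x - s| ^ α) := by
    intro s
    rw [deriv_comp_neg, neg_neg]
    rw [show |-x - -s| = |x - s| from by rw [show -x - -s = -(x - s) from by ring, abs_neg]]
    ring
  simp_rw [h2]
  rw [intervalIntegral.integral_neg, intervalIntegral.integral_symm c x]
  ring

lemma caputo_est (g : ℝ → ℝ) (L p α : ℝ) (hL : 0 ≤ L) (hp : 0 < p)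
    (hα0 : 0 < α) (hα1 : α < 1)
    (hdg : Differentiable ℝ g) (hcg : Continuous (deriv g))
    (hH : ∀ s t : ℝ, |g s - g t - deriv g t * (s - t)| ≤ L / (1 + p) * |s - t| ^ (1 + p))
    {c x : ℝ} (hne : c ≠ x) :
    |caputo α c g x - deriv g x * (x - c) * |x - c| ^ (-α) / Real.Gamma (2 - α)| ≤
      L * |x - c| ^ (1 + p - α) / ((1 + p - α) * Real.Gamma (1 - α)) := by
  rcases lt_or_gt_of_ne hne with h | h
  · have hpos : (0:ℝ) < x - c := by linarith
    have hax : |x - c| = x - c := abs_of_pos hpos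
    have hlt := caputo_est_lt g L p α hL hp hα0 hα1 hdg hcg hH h
    rw [hax]
    rw [show deriv g x * (x - c) * (x - c) ^ (-α) = deriv g x * (x - c) ^ (1 - α) from by
      rw [show (1:ℝ) - α = 1 + -α from by ring, Real.rpow_add hpos, Real.rpow_one]; ring]
    exact hlt
  · have hxc : x < c := h
    have hax : |x - c| = c - x := by rw [abs_of_neg (by linarith : x - c < 0)]; ring
    have hpos : (0:ℝ) < c - x := by linarith
    have hdG : Differentiable ℝ (fun y => g (-y)) := hdg.comp differentiable_neg
    have hderG : ∀ t : ℝ, deriv (fun y => g (-y)) t = -deriv g (-t) :=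
      fun t => deriv_comp_neg g t
    have hcG : Continuous (deriv (fun y => g (-y))) := by
      have he : deriv (fun y => g (-y)) = fun t => -deriv g (-t) := funext hderG
      rw [he]
      exact (hcg.comp continuous_neg).neg
    have hHG : ∀ s t : ℝ, |g (-s) - g (-t) - deriv (fun y => g (-y)) t * (s - t)| ≤
        L / (1 + p) * |s - t| ^ (1 + p) := by
      intro s t
      have h0 := hH (-s) (-t)
      rw [hderG]
      have h1 : g (-s) - g (-t) - -deriv g (-t) * (s - t) =
          g (-s) - g (-t) - deriv g (-t) * (-s - -t) := by ring
      have h2 : |-s - -t| = |s - t| := by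
        rw [show -s - -t = -(s - t) from by ring, abs_neg]
      rw [h1]
      rw [h2] at h0
      exact h0
    have hlt := caputo_est_lt (fun y => g (-y)) L p α hL hp hα0 hα1 hdG hcG hHG
      (c := -c) (x := -x) (by linarith)
    rw [caputo_reflect] at hlt
    have e1 : deriv (fun y => g (-y)) (-x) = -deriv g x := by rw [hderG, neg_neg]
    have e2 : -x - -c = c - x := by ring
    rw [e1, e2] at hlt
    rw [hax]
    rw [show deriv g x * (x - c) * (c - x) ^ (-α) = -deriv g x * (c - x) ^ (1 - α) from by
      rw [show (1:ℝ) - α = 1 + -α from by ring, Real.rpow_add hpos, Real.rpow_one]; ring]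
    exact hlt

lemma pfg_bounds (g : ℝ → ℝ) (L p α lam K : ℝ) (hL : 0 < L) (hp : 0 < p)
    (hα0 : 0 < α) (hα1 : α < 1) (hlam : 0 < lam)
    (hK : K = L * (1 - α) / (1 + p - α))
    (hdg : Differentiable ℝ g) (hcg : Continuous (deriv g))
    (hH : ∀ s t : ℝ, |g s - g t - deriv g t * (s - t)| ≤ L / (1 + p) * |s - t| ^ (1 + p))
    (c x : ℝ) (hxc : |x - c| = lam * |deriv g x| ^ (1 / p)) :
    (lam ^ (1 - p) - K * lam) * |deriv g x| ^ (1 + 1 / p) ≤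
        deriv g x * pFracGrad α p c g x ∧
      |pFracGrad α p c g x| ≤ (lam ^ (1 - p) + K * lam) * |deriv g x| ^ (1 / p) := by
  have hp1 : (1:ℝ) / p ≠ 0 := by positivity
  by_cases h0 : deriv g x = 0
  · have hd0 : |x - c| = 0 := by
      rw [hxc, h0, abs_zero, Real.zero_rpow hp1, mul_zero]
    have hxceq : x = c := by
      have := abs_eq_zero.mp hd0
      linarith [this]
    rw [pFracGrad, if_pos hxceq, h0, abs_zero,
      Real.zero_rpow (by positivity : (1:ℝ) + 1/p ≠ 0), Real.zero_rpow hp1]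
    norm_num
  · have hgx : 0 < |deriv g x| := abs_pos.mpr h0
    have hd : (0:ℝ) < |x - c| := by rw [hxc]; positivity
    have hne2 : x ≠ c := by
      intro he
      rw [he, sub_self, abs_zero] at hd
      linarith
    have hxc2 : x - c ≠ 0 := sub_ne_zero.mpr hne2
    have hne : c ≠ x := fun he => hne2 he.symm
    have hpα : (0:ℝ) < 1 + p - α := by linarith
    have hΓpos : 0 < Real.Gamma (1 - α) := Real.Gamma_pos_of_pos (by linarith)
    have hΓ2 : Real.Gamma (2 - α) = (1 - α) * Real.Gamma (1 - α) := by
      rw [show (2:ℝ) - α = (1 - α) + 1 from by ring,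
        Real.Gamma_add_one (by intro h'; linarith [h'])]
    have hΓ2pos : 0 < Real.Gamma (2 - α) := by
      rw [hΓ2]; have : (0:ℝ) < 1 - α := by linarith
      positivity
    have hest := caputo_est g L p α hL.le hp hα0 hα1 hdg hcg hH hne
    set E : ℝ := caputo α c g x -
      deriv g x * (x - c) * |x - c| ^ (-α) / Real.Gamma (2 - α) with hE
    set A : ℝ := Real.Gamma (2 - α) * |x - c| ^ (α - p + 1) / (x - c) with hA
    have hAM : A * (deriv g x * (x - c) * |x - c| ^ (-α) / Real.Gamma (2 - α)) =
        deriv g x * |x - c| ^ (1 - p) := by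
      have hr : |x - c| ^ (α - p + 1) * |x - c| ^ (-α) = |x - c| ^ (1 - p) := by
        rw [← Real.rpow_add hd]; congr 1; ring
      rw [hA, div_mul_div_comm]
      rw [show Real.Gamma (2 - α) * |x - c| ^ (α - p + 1) *
          (deriv g x * (x - c) * |x - c| ^ (-α)) =
          (deriv g x * |x - c| ^ (1 - p)) * ((x - c) * Real.Gamma (2 - α)) from by
        rw [← hr]; ring]
      rw [mul_div_assoc, div_self (mul_ne_zero hxc2 (ne_of_gt hΓ2pos)), mul_one]
    have hδ : pFracGrad α p c g x = deriv g x * |x - c| ^ (1 - p) + A * E := by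
      rw [pFracGrad, if_neg hne2, ← hA, ← hAM, hE]
      ring
    have hEbound : |A * E| ≤ K * |x - c| := by
      rw [abs_mul]
      have h1 : |A| = Real.Gamma (2 - α) * |x - c| ^ (α - p + 1) / |x - c| := by
        rw [hA, abs_div, abs_mul, abs_of_pos hΓ2pos,
          abs_of_nonneg (Real.rpow_nonneg (abs_nonneg _) _)]
      rw [h1]
      calc Real.Gamma (2 - α) * |x - c| ^ (α - p + 1) / |x - c| * |E|
          ≤ Real.Gamma (2 - α) * |x - c| ^ (α - p + 1) / |x - c| *
            (L * |x - c| ^ (1 + p - α) / ((1 + p - α) * Real.Gamma (1 - α))) :=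
            mul_le_mul_of_nonneg_left hest (by positivity)
        _ = K * |x - c| := by
            have hXZ : |x - c| ^ (α - p + 1) * |x - c| ^ (1 + p - α) =
                |x - c| * |x - c| := by
              rw [← Real.rpow_add hd, show α - p + 1 + (1 + p - α) = 1 + 1 from by ring,
                Real.rpow_add hd, Real.rpow_one]
            rw [hΓ2, hK]
            field_simp
            linear_combination (1 - α) * hXZ
    clear_value A E
    have hW : |x - c| ^ (1 - p) = lam ^ (1 - p) * |deriv g x| ^ (1 / p - 1) := by
      rw [hxc, Real.mul_rpow hlam.le (Real.rpow_nonneg (abs_nonneg _) _),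
        ← Real.rpow_mul (abs_nonneg _)]
      congr 1
      field_simp
    have k1 : |deriv g x| * |deriv g x| ^ (1 / p - 1) = |deriv g x| ^ (1 / p) := by
      nth_rewrite 1 [← Real.rpow_one |deriv g x|]
      rw [← Real.rpow_add hgx]
      congr 1; ring
    have k2 : |deriv g x| * |deriv g x| ^ (1 / p) = |deriv g x| ^ (1 + 1 / p) := by
      nth_rewrite 1 [← Real.rpow_one |deriv g x|]
      rw [← Real.rpow_add hgx]
    have hDD : deriv g x * (deriv g x * |x - c| ^ (1 - p)) =
        lam ^ (1 - p) * |deriv g x| ^ (1 + 1 / p) := by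
      rw [hW]
      rw [show deriv g x * (deriv g x * (lam ^ (1 - p) * |deriv g x| ^ (1 / p - 1))) =
          lam ^ (1 - p) * (deriv g x * deriv g x * |deriv g x| ^ (1 / p - 1)) from by ring]
      rw [← abs_mul_abs_self (deriv g x)]
      rw [show lam ^ (1 - p) * (|deriv g x| * |deriv g x| * |deriv g x| ^ (1 / p - 1)) =
          lam ^ (1 - p) * (|deriv g x| * (|deriv g x| * |deriv g x| ^ (1 / p - 1))) from by
        ring]
      rw [k1, k2]
    have hErr : |deriv g x * (A * E)| ≤ K * lam * |deriv g x| ^ (1 + 1 / p) := by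
      rw [abs_mul]
      calc |deriv g x| * |A * E| ≤ |deriv g x| * (K * |x - c|) :=
            mul_le_mul_of_nonneg_left hEbound (abs_nonneg _)
        _ = K * lam * (|deriv g x| * |deriv g x| ^ (1 / p)) := by rw [hxc]; ring
        _ = K * lam * |deriv g x| ^ (1 + 1 / p) := by rw [k2]
    constructor
    · have h1 : deriv g x * pFracGrad α p c g x =
          lam ^ (1 - p) * |deriv g x| ^ (1 + 1 / p) + deriv g x * (A * E) := by
        rw [hδ, mul_add, hDD]
      rw [h1]
      have h4 := (abs_le.mp hErr).1
      linarith [h4]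
    · rw [hδ]
      calc |deriv g x * |x - c| ^ (1 - p) + A * E|
          ≤ |deriv g x * |x - c| ^ (1 - p)| + |A * E| := abs_add_le _ _
        _ ≤ lam ^ (1 - p) * |deriv g x| ^ (1 / p) + K * lam * |deriv g x| ^ (1 / p) := by
            have h4 : |deriv g x * |x - c| ^ (1 - p)| =
                lam ^ (1 - p) * |deriv g x| ^ (1 / p) := by
              rw [abs_mul, abs_of_nonneg (Real.rpow_nonneg (abs_nonneg _) _), hW,
                show |deriv g x| * (lam ^ (1 - p) * |deriv g x| ^ (1 / p - 1)) =
                  lam ^ (1 - p) * (|deriv g x| * |deriv g x| ^ (1 / p - 1)) from by ring,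
                k1]
            have h5 : |A * E| ≤ K * lam * |deriv g x| ^ (1 / p) := by
              rw [hxc] at hEbound
              calc |A * E| ≤ K * (lam * |deriv g x| ^ (1 / p)) := hEbound
                _ = K * lam * |deriv g x| ^ (1 / p) := by ring
            linarith
        _ = (lam ^ (1 - p) + K * lam) * |deriv g x| ^ (1 / p) := by ring

lemma slice_props {k : ℕ} (f : (Fin k → ℝ) → ℝ) (hf : ContDiff ℝ 1 f) (L p : ℝ)
    (hsmooth : VHolderSmooth L p f) (hp : 0 < p) (X : Fin k → ℝ) (i : Fin k) :
    Differentiable ℝ (fun y : ℝ => f (Function.update X i y)) ∧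
    Continuous (deriv (fun y : ℝ => f (Function.update X i y))) ∧
    ∀ s t : ℝ, |f (Function.update X i s) - f (Function.update X i t) -
      deriv (fun y : ℝ => f (Function.update X i y)) t * (s - t)| ≤
      L / (1 + p) * |s - t| ^ (1 + p) := by
  have hg : ContDiff ℝ 1 (fun y : ℝ => f (Function.update X i y)) :=
    hf.comp (contDiff_update 1 X i)
  refine ⟨hg.differentiable one_ne_zero, hg.continuous_deriv le_rfl, ?_⟩
  intro s t
  have h := hsmooth (Function.update X i t) (Function.update X i s)
  have hD : partialGrad f (Function.update X i t) i =
      deriv (fun y : ℝ => f (Function.update X i y)) t := by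
    rw [partialGrad]
    simp only [Function.update_idem, Function.update_self]
  have hsum1 : (∑ j, partialGrad f (Function.update X i t) j *
      (Function.update X i s j - Function.update X i t j)) =
      deriv (fun y : ℝ => f (Function.update X i y)) t * (s - t) := by
    rw [Finset.sum_eq_single i]
    · rw [hD, Function.update_self, Function.update_self]
    · intro j _ hj
      rw [Function.update_of_ne hj, Function.update_of_ne hj]
      simp
    · intro hmem; exact absurd (Finset.mem_univ i) hmem
  have hsum2 : (∑ j, |Function.update X i s j - Function.update X i t j| ^ (1 + p)) =
      |s - t| ^ (1 + p) := by
    rw [Finset.sum_eq_single i]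
    · rw [Function.update_self, Function.update_self]
    · intro j _ hj
      rw [Function.update_of_ne hj, Function.update_of_ne hj, sub_self, abs_zero,
        Real.zero_rpow (by positivity : (1:ℝ) + p ≠ 0)]
    · intro hmem; exact absurd (Finset.mem_univ i) hmem
  rw [hsum1, hsum2] at h
  exact h

lemma descent {k : ℕ} (f : (Fin k → ℝ) → ℝ) (hf : ContDiff ℝ 1 f) (L p α lam K η : ℝ)
    (hL : 0 < L) (hp : 0 < p) (hα0 : 0 < α) (hα1 : α < 1) (hlam : 0 < lam) (hη : 0 < η)
    (hK : K = L * (1 - α) / (1 + p - α)) (hsmooth : VHolderSmooth L p f)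
    (X C : Fin k → ℝ) (hc : ∀ i, |X i - C i| = lam * |partialGrad f X i| ^ (1 / p)) :
    f (fun i => X i - η * pFracGradVec α p C f X i) ≤ f X -
      (η * (lam ^ (1 - p) - K * lam -
        L / (1 + p) * η ^ p * (lam ^ (1 - p) + K * lam) ^ (1 + p))) *
      ∑ i, |partialGrad f X i| ^ (1 + 1 / p) := by
  have hpα : (0:ℝ) < 1 + p - α := by linarith
  have hKpos : 0 < K := by
    rw [hK]
    have h1 : (0:ℝ) < 1 - α := by linarith
    positivity
  have hb : (0:ℝ) ≤ lam ^ (1 - p) + K * lam := by positivity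
  set D : Fin k → ℝ := partialGrad f X with hDdef
  set δ : Fin k → ℝ := pFracGradVec α p C f X with hδdef
  have hbounds : ∀ i, (lam ^ (1 - p) - K * lam) * |D i| ^ (1 + 1 / p) ≤ D i * δ i ∧
      |δ i| ≤ (lam ^ (1 - p) + K * lam) * |D i| ^ (1 / p) := by
    intro i
    obtain ⟨hd1, hd2, hd3⟩ := slice_props f hf L p hsmooth hp X i
    exact pfg_bounds (fun y => f (Function.update X i y)) L p α lam K hL hp hα0 hα1
      hlam hK hd1 hd2 hd3 (C i) (X i) (hc i)
  have hmain := hsmooth X (fun i => X i - η * δ i)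
  have hs1 : (∑ i, D i * ((X i - η * δ i) - X i)) = -(η * ∑ i, D i * δ i) := by
    rw [Finset.sum_congr rfl (fun i _ => show D i * ((X i - η * δ i) - X i) =
      -(η * (D i * δ i)) from by ring)]
    rw [Finset.sum_neg_distrib, ← Finset.mul_sum]
  have hterm : ∀ i, |(X i - η * δ i) - X i| ^ (1 + p) ≤
      η ^ (1 + p) * (lam ^ (1 - p) + K * lam) ^ (1 + p) * |D i| ^ (1 + 1 / p) := by
    intro i
    have h1 : |(X i - η * δ i) - X i| = η * |δ i| := by
      rw [show (X i - η * δ i) - X i = -(η * δ i) from by ring, abs_neg, abs_mul,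
        abs_of_pos hη]
    rw [h1]
    have h2 : η * |δ i| ≤ η * ((lam ^ (1 - p) + K * lam) * |D i| ^ (1 / p)) :=
      mul_le_mul_of_nonneg_left (hbounds i).2 hη.le
    calc (η * |δ i|) ^ (1 + p)
        ≤ (η * ((lam ^ (1 - p) + K * lam) * |D i| ^ (1 / p))) ^ (1 + p) :=
          Real.rpow_le_rpow (by positivity) h2 (by positivity)
      _ = η ^ (1 + p) * (lam ^ (1 - p) + K * lam) ^ (1 + p) * |D i| ^ (1 + 1 / p) := by
          rw [Real.mul_rpow hη.le (by positivity),
            Real.mul_rpow hb (Real.rpow_nonneg (abs_nonneg _) _),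
            ← Real.rpow_mul (abs_nonneg _),
            show (1 / p) * (1 + p) = 1 + 1 / p from by field_simp; ring]
          ring
  set S : ℝ := ∑ i, |D i| ^ (1 + 1 / p) with hSdef
  have hSnn : 0 ≤ S := Finset.sum_nonneg (fun i _ => Real.rpow_nonneg (abs_nonneg _) _)
  have hlow : (lam ^ (1 - p) - K * lam) * S ≤ ∑ i, D i * δ i := by
    rw [hSdef, Finset.mul_sum]
    exact Finset.sum_le_sum (fun i _ => (hbounds i).1)
  have hup : (∑ i, |(X i - η * δ i) - X i| ^ (1 + p)) ≤
      η ^ (1 + p) * (lam ^ (1 - p) + K * lam) ^ (1 + p) * S := by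
    rw [hSdef, Finset.mul_sum]
    exact Finset.sum_le_sum (fun i _ => hterm i)
  have habs := (abs_le.mp hmain).2
  rw [hs1] at habs
  have hmul1 : η * ((lam ^ (1 - p) - K * lam) * S) ≤ η * ∑ i, D i * δ i :=
    mul_le_mul_of_nonneg_left hlow hη.le
  have hmul2 : L / (1 + p) * (∑ i, |(X i - η * δ i) - X i| ^ (1 + p)) ≤
      L / (1 + p) * (η ^ (1 + p) * (lam ^ (1 - p) + K * lam) ^ (1 + p) * S) :=
    mul_le_mul_of_nonneg_left hup (by positivity)
  have hηsplit : η ^ ((1:ℝ) + p) = η * η ^ p := by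
    rw [Real.rpow_add hη, Real.rpow_one]
  have heq : L / (1 + p) * (η ^ ((1:ℝ) + p) * (lam ^ (1 - p) + K * lam) ^ (1 + p) * S) =
      η * (L / (1 + p) * η ^ p * (lam ^ (1 - p) + K * lam) ^ (1 + p)) * S := by
    rw [hηsplit]; ring
  rw [heq] at hmul2
  nlinarith [habs, hmul1, hmul2]

end Aux

/-- `O(1/T)` convergence to a stationary point of `p`-fractional gradient
descent for Hölder smooth functions. -/
theorem pFracGradDescent_convergence (k : ℕ) (hk : 1 ≤ k) (f : (Fin k → ℝ) → ℝ)
    (hf : ContDiff ℝ 1 f) (L p : ℝ) (hL : 0 < L) (hp : 0 < p)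
    (hsmooth : VHolderSmooth L p f) (fstar : ℝ) (hfstar : ∀ x, fstar ≤ f x)
    (α : ℝ) (hα : α ∈ Set.Ioo (0 : ℝ) 1) (K : ℝ) (hK : K = L * (1 - α) / (1 + p - α))
    (lam : ℝ) (hlam : 0 < lam) (hlam' : lam < (1 / K) ^ (1 / p))
    (η : ℝ) (hη : 0 < η)
    (hη' : η < ((1 + p) * (lam ^ (1 - p) - K * lam) /
      (L * (lam ^ (1 - p) + K * lam) ^ (1 + p))) ^ (1 / p))
    (T : ℕ) (x c : ℕ → Fin k → ℝ)
    (hc : ∀ t i, |x t i - c t i| = lam * |partialGrad f (x t) i| ^ (1 / p))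
    (hrec : ∀ t, x (t + 1) = fun i => x t i - η * pFracGradVec α p (c t) f (x t) i)
    (ψ : ℝ) (hψ : ψ = η * (lam ^ (1 - p) - K * lam -
      L / (1 + p) * η ^ p * (lam ^ (1 - p) + K * lam) ^ (1 + p))) :
    ∃ t ≤ T, ∑ i, |partialGrad f (x t) i| ^ (1 + 1 / p) ≤
      (f (x 0) - fstar) / (((T : ℝ) + 1) * ψ) := by
  obtain ⟨hα0, hα1⟩ := hα
  have hpα : (0:ℝ) < 1 + p - α := by linarith
  have hKpos : 0 < K := by
    rw [hK]
    have h1 : (0:ℝ) < 1 - α := by linarith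
    positivity
  have hKp1 : K * lam ^ p < 1 := by
    have h1 : lam ^ p < ((1 / K) ^ (1 / p)) ^ p := Real.rpow_lt_rpow hlam.le hlam' hp
    have h2 : ((1 / K) ^ (1 / p)) ^ p = 1 / K := by
      rw [← Real.rpow_mul (by positivity : (0:ℝ) ≤ 1 / K),
        show (1 / p) * p = 1 from by field_simp, Real.rpow_one]
    rw [h2, lt_div_iff₀ hKpos] at h1
    linarith
  have hlam1p : lam ^ (1 - p) * lam ^ p = lam := by
    rw [← Real.rpow_add hlam, show (1:ℝ) - p + p = 1 from by ring, Real.rpow_one]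
  have ha : 0 < lam ^ (1 - p) - K * lam := by
    have h3 : 0 < lam ^ (1 - p) := Real.rpow_pos_of_pos hlam _
    have h4 : 0 < lam ^ p := Real.rpow_pos_of_pos hlam _
    nlinarith
  have hb : (0:ℝ) < lam ^ (1 - p) + K * lam := by positivity
  have hbp : (0:ℝ) < (lam ^ (1 - p) + K * lam) ^ (1 + p) := Real.rpow_pos_of_pos hb _
  have hψpos : 0 < ψ := by
    have hQ : (0:ℝ) < (1 + p) * (lam ^ (1 - p) - K * lam) /
        (L * (lam ^ (1 - p) + K * lam) ^ (1 + p)) := by positivity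
    have h1 : η ^ p < (((1 + p) * (lam ^ (1 - p) - K * lam) /
        (L * (lam ^ (1 - p) + K * lam) ^ (1 + p))) ^ (1 / p)) ^ p :=
      Real.rpow_lt_rpow hη.le hη' hp
    have h2 : (((1 + p) * (lam ^ (1 - p) - K * lam) /
        (L * (lam ^ (1 - p) + K * lam) ^ (1 + p))) ^ (1 / p)) ^ p =
        (1 + p) * (lam ^ (1 - p) - K * lam) /
        (L * (lam ^ (1 - p) + K * lam) ^ (1 + p)) := by
      rw [← Real.rpow_mul hQ.le, show (1 / p) * p = 1 from by field_simp, Real.rpow_one]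
    rw [h2, lt_div_iff₀ (by positivity)] at h1
    have h5 : L / (1 + p) * η ^ p * (lam ^ (1 - p) + K * lam) ^ (1 + p) <
        lam ^ (1 - p) - K * lam := by
      rw [div_mul_eq_mul_div, div_mul_eq_mul_div, div_lt_iff₀ (by linarith : (0:ℝ) < 1 + p)]
      nlinarith
    rw [hψ]
    exact mul_pos hη (by linarith)
  have hSnn : ∀ t : ℕ, 0 ≤ ∑ i, |partialGrad f (x t) i| ^ (1 + 1 / p) :=
    fun t => Finset.sum_nonneg (fun i _ => Real.rpow_nonneg (abs_nonneg _) _)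
  have hdesc : ∀ t : ℕ, f (x (t + 1)) ≤ f (x t) -
      ψ * ∑ i, |partialGrad f (x t) i| ^ (1 + 1 / p) := by
    intro t
    rw [hrec t, hψ]
    exact descent f hf L p α lam K η hL hp hα0 hα1 hlam hη hK hsmooth (x t) (c t) (hc t)
  have htel : ∀ n : ℕ, f (x n) +
      ψ * ∑ t ∈ Finset.range n, ∑ i, |partialGrad f (x t) i| ^ (1 + 1 / p) ≤ f (x 0) := by
    intro n
    induction n with
    | zero => simp
    | succ m ih =>
      rw [Finset.sum_range_succ, mul_add]
      have := hdesc m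
      linarith
  obtain ⟨t0, ht0mem, ht0min⟩ := Finset.exists_min_image (Finset.range (T + 1))
    (fun t => ∑ i, |partialGrad f (x t) i| ^ (1 + 1 / p))
    ⟨0, Finset.mem_range.mpr (Nat.succ_pos T)⟩
  refine ⟨t0, Nat.lt_succ_iff.mp (Finset.mem_range.mp ht0mem), ?_⟩
  have hcard : ((T:ℝ) + 1) * ∑ i, |partialGrad f (x t0) i| ^ (1 + 1 / p) ≤
      ∑ t ∈ Finset.range (T + 1), ∑ i, |partialGrad f (x t) i| ^ (1 + 1 / p) := by
    have h1 := Finset.card_nsmul_le_sum (Finset.range (T + 1))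
      (fun t => ∑ i, |partialGrad f (x t) i| ^ (1 + 1 / p))
      (∑ i, |partialGrad f (x t0) i| ^ (1 + 1 / p)) (fun t ht => ht0min t ht)
    rw [Finset.card_range, nsmul_eq_mul] at h1
    push_cast at h1
    exact h1
  have hsum_le : ψ * ∑ t ∈ Finset.range (T + 1),
      ∑ i, |partialGrad f (x t) i| ^ (1 + 1 / p) ≤ f (x 0) - fstar := by
    have h1 := htel (T + 1)
    have h2 := hfstar (x (T + 1))
    linarith
  have hT1ψ : 0 < ((T:ℝ) + 1) * ψ := by positivity
  rw [le_div_iff₀ hT1ψ]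
  have h3 : ψ * (((T:ℝ) + 1) * ∑ i, |partialGrad f (x t0) i| ^ (1 + 1 / p)) ≤
      ψ * ∑ t ∈ Finset.range (T + 1), ∑ i, |partialGrad f (x t) i| ^ (1 + 1 / p) :=
    mul_le_mul_of_nonneg_left hcard hψpos.le
  nlinarith [hsum_le, h3]
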